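/- arXiv:2206.03339 — 4 statements merged into one kernel-verified Lean document; each statement's English description precedes it below -/
import Mathlib

section
/- For any tree T on t vertices (t ≥ 2), every simple graph on n vertices with more than (t-2)·n edges contains a subgraph isomorphic to T. -/
/-- `T` has a copy in `G`: an injective graph homomorphism image, i.e. a subgraph of `G`
isomorphic to `T`. -/
def ContainsCopy {α β : Type*} (T : SimpleGraph α) (G : SimpleGraph β) : Prop :=
  ∃ f : α → β, Function.Injective f ∧ ∀ a b, T.Adj a b → G.Adj (f a) (f b)

open Finset

section Aux

variable {V : Type*} [Fintype V] [DecidableEq V] (G : SimpleGraph V) [DecidableRel G.Adj]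

lemma sum_erase_deg (s : Finset V) (v : V) (hv : v ∈ s) :
    (∑ u ∈ s.erase v, ((s.erase v).filter (G.Adj u)).card) + 2 * (s.filter (G.Adj v)).card
      = ∑ u ∈ s, (s.filter (G.Adj u)).card := by
  have h1 : ∀ u ∈ s.erase v, ((s.erase v).filter (G.Adj u)).card + (if G.Adj u v then 1 else 0)
      = (s.filter (G.Adj u)).card := by
    intro u hu
    rw [Finset.filter_erase]
    split_ifs with h
    · rw [Finset.card_erase_of_mem (by simp [hv, h]), Nat.sub_add_cancel]
      exact Finset.card_pos.mpr ⟨v, by simp [hv, h]⟩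
    · rw [Finset.erase_eq_of_notMem (by simp [h]), Nat.add_zero]
  have h3 : ∑ u ∈ s.erase v, (if G.Adj u v then 1 else 0) = (s.filter (G.Adj v)).card := by
    rw [Finset.sum_boole]
    have : Finset.filter (fun u => G.Adj u v) (s.erase v) = s.filter (G.Adj v) := by
      ext u
      simp only [Finset.mem_filter, Finset.mem_erase]
      constructor
      · rintro ⟨⟨_, hu⟩, ha⟩; exact ⟨hu, ha.symm⟩
      · rintro ⟨hu, ha⟩; exact ⟨⟨(G.ne_of_adj ha).symm, hu⟩, ha.symm⟩
    rw [this]; simp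
  have h4 : ∑ u ∈ s, (s.filter (G.Adj u)).card
      = (∑ u ∈ s.erase v, (s.filter (G.Adj u)).card) + (s.filter (G.Adj v)).card := by
    rw [Finset.sum_erase_add s _ hv]
  rw [h4, ← Finset.sum_congr rfl h1, Finset.sum_add_distrib, h3]
  ring

lemma exists_min_deg_subset (k : ℕ) (s : Finset V)
    (h : 2 * k * s.card < ∑ u ∈ s, (s.filter (G.Adj u)).card) :
    ∃ s' ⊆ s, s'.Nonempty ∧ ∀ v ∈ s', k + 1 ≤ (s'.filter (G.Adj v)).card := by
  induction s using Finset.strongInduction with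
  | _ s ih =>
    have hne : s.Nonempty := by
      rcases s.eq_empty_or_nonempty with rfl | h'
      · simp at h
      · exact h'
    by_cases hall : ∀ v ∈ s, k + 1 ≤ (s.filter (G.Adj v)).card
    · exact ⟨s, le_refl _, hne, hall⟩
    · push_neg at hall
      obtain ⟨v, hv, hdeg⟩ := hall
      have hdeg' : (s.filter (G.Adj v)).card ≤ k := by omega
      have key := sum_erase_deg G s v hv
      have hcard : s.card = (s.erase v).card + 1 :=
        (Finset.card_erase_add_one hv).symm
      have h' : 2 * k * (s.erase v).card < ∑ u ∈ s.erase v, ((s.erase v).filter (G.Adj u)).card := by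
        have hexp : 2 * k * s.card = 2 * k * (s.erase v).card + 2 * k := by
          rw [hcard]; ring
        omega
      obtain ⟨s', hs', h1, h2⟩ := ih (s.erase v) (Finset.erase_ssubset hv) h'
      exact ⟨s', hs'.trans (Finset.erase_subset _ _), h1, h2⟩


variable {α : Type*} [Fintype α] [DecidableEq α]

lemma two_le_degree {T : SimpleGraph α} [DecidableRel T.Adj] {l a b : α}
    (ha : T.Adj l a) (hb : T.Adj l b) (hab : a ≠ b) : 2 ≤ T.degree l := by
  have hsub : {a, b} ⊆ T.neighborFinset l := by
    intro x hx
    simp only [Finset.mem_insert, Finset.mem_singleton] at hx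
    rcases hx with rfl | rfl <;> simp [SimpleGraph.mem_neighborFinset, ha, hb]
  calc 2 = ({a, b} : Finset α).card := by rw [Finset.card_insert_of_notMem (by simp [hab]), Finset.card_singleton]
    _ ≤ (T.neighborFinset l).card := Finset.card_le_card hsub
    _ = T.degree l := rfl

lemma leaf_notMem_path {T : SimpleGraph α} [DecidableRel T.Adj] {l : α}
    (hl : T.degree l = 1) :
    ∀ {u v : α} (p : T.Walk u v), p.IsPath → u ≠ l → v ≠ l → l ∉ p.support := by
  intro u v p
  induction p with
  | nil => intro _ hu _; simp [hu.symm]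
  | @cons u x v h q ih =>
    intro hp hu hv
    rw [SimpleGraph.Walk.support_cons, List.mem_cons]
    push_neg
    refine ⟨Ne.symm hu, ?_⟩
    by_cases hx : x = l
    · subst hx
      cases q with
      | nil => exact absurd rfl hv
      | @cons _ y _ h' q' =>
        exfalso
        have huy : u ≠ y := by
          have := hp.support_nodup
          simp only [SimpleGraph.Walk.support_cons, List.nodup_cons] at this
          intro heq
          exact this.1 (by
            subst heq
            simp [SimpleGraph.Walk.support_cons])
        have := two_le_degree h.symm h' huy
        omega
    · exact ih hp.of_cons hx hv

lemma exists_leaf {T : SimpleGraph α} [DecidableRel T.Adj] (hT : T.IsTree)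
    (h2 : 2 ≤ Fintype.card α) : ∃ l, T.degree l = 1 := by
  have hdeg1 : ∀ v, 1 ≤ T.degree v := by
    intro v
    obtain ⟨w, hw⟩ := Fintype.exists_ne_of_one_lt_card (by omega) v
    obtain ⟨p⟩ := hT.isConnected.preconnected v w
    cases p with
    | nil => exact absurd rfl hw.symm
    | cons h q =>
      have : _ ∈ T.neighborFinset v := (T.mem_neighborFinset v _).mpr h
      exact Finset.card_pos.mpr ⟨_, this⟩
  by_contra hno
  push_neg at hno
  have hdeg2 : ∀ v, 2 ≤ T.degree v := by
    intro v
    have := hdeg1 v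
    have := hno v
    omega
  have hsum : ∑ v, T.degree v = 2 * T.edgeFinset.card :=
    T.sum_degrees_eq_twice_card_edges
  have hE : T.edgeFinset.card + 1 = Fintype.card α := hT.card_edgeFinset
  have : 2 * Fintype.card α ≤ ∑ v, T.degree v := by
    calc 2 * Fintype.card α = ∑ _v : α, 2 := by
          rw [Finset.sum_const, smul_eq_mul, Finset.card_univ, mul_comm]
      _ ≤ ∑ v, T.degree v := Finset.sum_le_sum (fun v _ => hdeg2 v)
  omega

lemma walk_avoid {T : SimpleGraph α} {l : α} :
    ∀ {u v : α} (p : T.Walk u v) (hu : u ≠ l) (hv : v ≠ l), l ∉ p.support →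
      (T.comap (Subtype.val : {x : α // x ≠ l} → α)).Reachable ⟨u, hu⟩ ⟨v, hv⟩ := by
  intro u v p
  induction p with
  | nil => intro _ _ _; rfl
  | @cons u x v h q ih =>
    intro hu hv hsup
    rw [SimpleGraph.Walk.support_cons, List.mem_cons] at hsup
    push_neg at hsup
    have hx : x ≠ l := fun he => hsup.2 (he ▸ q.start_mem_support)
    have hadj : (T.comap (Subtype.val : {x : α // x ≠ l} → α)).Adj ⟨u, hu⟩ ⟨x, hx⟩ := h
    exact hadj.reachable.trans (ih hx hv hsup.2)

lemma leaf_deletion_isTree {T : SimpleGraph α} [DecidableRel T.Adj] (hT : T.IsTree)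
    {l : α} (hl : T.degree l = 1) (h2 : 2 ≤ Fintype.card α) :
    (T.comap (Subtype.val : {x : α // x ≠ l} → α)).IsTree := by
  set T' := T.comap (Subtype.val : {x : α // x ≠ l} → α) with hT'
  let hhom : T' →g T := ⟨Subtype.val, fun h => h⟩
  have hne : Nonempty {x : α // x ≠ l} := by
    obtain ⟨w, hw⟩ := Fintype.exists_ne_of_one_lt_card (by omega) l
    exact ⟨⟨w, hw⟩⟩
  constructor
  · -- connected
    rw [SimpleGraph.connected_iff]
    refine ⟨?_, hne⟩
    intro u v
    obtain ⟨w⟩ := hT.isConnected.preconnected u.val v.val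
    have hlp : l ∉ (w.toPath : T.Walk u.val v.val).support :=
      leaf_notMem_path hl _ w.toPath.2 u.2 v.2
    have := walk_avoid (w.toPath : T.Walk u.val v.val) u.2 v.2 hlp
    simpa using this
  · intro v c hc
    have hinj : Function.Injective (⇑hhom) := Subtype.val_injective
    have := (SimpleGraph.Walk.map_isCycle_iff_of_injective (p := c) (f := hhom) hinj).mpr hc
    exact hT.IsAcyclic _ this

lemma embed {n : ℕ} (G : SimpleGraph (Fin n)) [DecidableRel G.Adj] :
    ∀ (m : ℕ) (β : Type) [Fintype β] [DecidableEq β] (T : SimpleGraph β) [DecidableRel T.Adj],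
      T.IsTree → Fintype.card β = m →
      ∀ s : Finset (Fin n), s.Nonempty →
        (∀ v ∈ s, m - 1 ≤ (s.filter (G.Adj v)).card) →
        ∃ f : β → Fin n, Function.Injective f ∧ (∀ a, f a ∈ s) ∧
          ∀ a b, T.Adj a b → G.Adj (f a) (f b) := by
  intro m
  induction m with
  | zero =>
    intro β _ _ T _ hT hcard s hsne hs
    obtain ⟨x⟩ := hT.isConnected.nonempty
    exact absurd hcard (by simp [Fintype.card_eq_zero_iff]; exact ⟨x⟩)
  | succ m ih =>
    intro β _ _ T _ hT hcard s hsne hs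
    rcases Nat.eq_zero_or_pos m with rfl | hm
    · obtain ⟨w, hw⟩ := hsne
      haveI hsub : Subsingleton β := Fintype.card_le_one_iff_subsingleton.mp (by omega)
      refine ⟨fun _ => w, fun a b _ => Subsingleton.elim a b, fun _ => hw, ?_⟩
      intro a b hab
      exact absurd (Subsingleton.elim a b) (T.ne_of_adj hab)
    · have h2 : 2 ≤ Fintype.card β := by omega
      obtain ⟨l, hl⟩ := exists_leaf hT h2
      obtain ⟨p, hp⟩ := Finset.card_eq_one.mp hl
      have hlp : T.Adj l p := by
        rw [← SimpleGraph.mem_neighborFinset, hp]; exact Finset.mem_singleton_self p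
      have hpl : p ≠ l := (T.ne_of_adj hlp).symm
      set T' := T.comap (Subtype.val : {x : β // x ≠ l} → β) with hT'def
      haveI : DecidableRel T'.Adj := fun a b => (inferInstance : Decidable (T.Adj a.val b.val))
      have hT'tree := leaf_deletion_isTree hT hl h2
      have hcard' : Fintype.card {x : β // x ≠ l} = m := by
        have := Fintype.card_subtype_compl (p := fun x => x = l) (α := β)
        simp only [Fintype.card_subtype_eq] at this
        have h : Fintype.card {x : β // x ≠ l} = Fintype.card {x : β // ¬ x = l} := rfl
        omega
      have hs' : ∀ v ∈ s, m - 1 ≤ (s.filter (G.Adj v)).card := by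
        intro v hv
        have := hs v hv
        omega
      obtain ⟨f', hf'inj, hf's, hf'adj⟩ := ih _ T' hT'tree hcard' s hsne hs'
      set P : {x : β // x ≠ l} := ⟨p, hpl⟩
      set F : Finset (Fin n) := Finset.univ.image f' with hFdef
      have hF : F.card = m := by
        rw [hFdef, Finset.card_image_of_injective _ hf'inj, Finset.card_univ, hcard']
      set N := s.filter (G.Adj (f' P)) with hNdef
      have hNcard : m ≤ N.card := by
        have h := hs (f' P) (hf's P)
        rw [← hNdef] at h
        omega
      have hPF : f' P ∈ F := Finset.mem_image_of_mem f' (Finset.mem_univ P)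
      have hsub2 : N ∩ F ⊆ F.erase (f' P) := by
        intro x hx
        rw [Finset.mem_inter] at hx
        rw [Finset.mem_erase]
        refine ⟨?_, hx.2⟩
        have : G.Adj (f' P) x := (Finset.mem_filter.mp hx.1).2
        exact (G.ne_of_adj this).symm
      have hNF : (N \ F).Nonempty := by
        rw [← Finset.card_pos]
        have h1 : (N ∩ F).card ≤ m - 1 := by
          have := Finset.card_le_card hsub2
          rw [Finset.card_erase_of_mem hPF, hF] at this
          exact this
        have h2' := Finset.card_sdiff_add_card_inter N F
        omega
      obtain ⟨w, hw⟩ := hNF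
      rw [Finset.mem_sdiff] at hw
      obtain ⟨hwN, hwF⟩ := hw
      have hws : w ∈ s := (Finset.mem_filter.mp hwN).1
      have hwadj : G.Adj (f' P) w := (Finset.mem_filter.mp hwN).2
      refine ⟨fun a => if h : a = l then w else f' ⟨a, h⟩, ?_, ?_, ?_⟩
      · intro a b hab
        by_cases ha : a = l <;> by_cases hb : b = l
        · rw [ha, hb]
        · simp only [dif_pos ha, dif_neg hb] at hab
          exact absurd (Finset.mem_image_of_mem f' (Finset.mem_univ ⟨b, hb⟩)) (hab ▸ hwF)
        · simp only [dif_neg ha, dif_pos hb] at hab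
          exact absurd (Finset.mem_image_of_mem f' (Finset.mem_univ ⟨a, ha⟩)) (hab ▸ hwF)
        · simp only [dif_neg ha, dif_neg hb] at hab
          have := hf'inj hab
          exact congrArg Subtype.val this
      · intro a
        by_cases ha : a = l
        · simp only [dif_pos ha]; exact hws
        · simp only [dif_neg ha]; exact hf's _
      · intro a b hab
        by_cases ha : a = l <;> by_cases hb : b = l
        · exact absurd (ha.trans hb.symm) (T.ne_of_adj hab)
        · simp only [dif_pos ha, dif_neg hb]
          have hbp : b = p := by
            have : b ∈ T.neighborFinset l := by
              rw [SimpleGraph.mem_neighborFinset]; exact ha ▸ hab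
            rw [hp, Finset.mem_singleton] at this
            exact this
          have : f' ⟨b, hb⟩ = f' P := by congr 1; exact Subtype.ext hbp
          rw [this]
          exact hwadj.symm
        · simp only [dif_neg ha, dif_pos hb]
          have hap : a = p := by
            have : a ∈ T.neighborFinset l := by
              rw [SimpleGraph.mem_neighborFinset]; exact hb ▸ hab.symm
            rw [hp, Finset.mem_singleton] at this
            exact this
          have : f' ⟨a, ha⟩ = f' P := by congr 1; exact Subtype.ext hap
          rw [this]
          exact hwadj
        · simp only [dif_neg ha, dif_neg hb]
          exact hf'adj ⟨a, ha⟩ ⟨b, hb⟩ hab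

end Aux

/-- For any tree `T` on `t` vertices (`t ≥ 2`), every simple graph on `n`
vertices with more than `(t-2)·n` edges contains a subgraph isomorphic to `T`. -/
theorem stmt1 (t n : ℕ) (ht : 2 ≤ t) (T : SimpleGraph (Fin t)) (hT : T.IsTree)
    (G : SimpleGraph (Fin n)) [DecidableRel G.Adj]
    (hG : (t - 2) * n < G.edgeFinset.card) :
    ContainsCopy T G := by
  haveI : DecidableRel T.Adj := Classical.decRel _
  have key : 2 * (t - 2) * (Finset.univ : Finset (Fin n)).card
      < ∑ u ∈ Finset.univ, ((Finset.univ : Finset (Fin n)).filter (G.Adj u)).card := by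
    have hdeg : ∀ u, ((Finset.univ : Finset (Fin n)).filter (G.Adj u)).card = G.degree u := by
      intro u
      rw [← SimpleGraph.neighborFinset_eq_filter]
      rfl
    rw [Finset.sum_congr rfl (fun u _ => hdeg u), SimpleGraph.sum_degrees_eq_twice_card_edges,
      Finset.card_univ, Fintype.card_fin]
    have hexp : 2 * (t - 2) * n = 2 * ((t - 2) * n) := by ring
    omega
  obtain ⟨s, _, hsne, hmin⟩ := exists_min_deg_subset G (t - 2) Finset.univ key
  obtain ⟨f, hinj, _, hadj⟩ := embed G t (Fin t) T hT (Fintype.card_fin t) s hsne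
    (fun v hv => by have := hmin v hv; omega)
  exact ⟨f, hinj, hadj⟩
end

section
/- The graph K_k ∨ ((2k-1)K_1 ∪ K_2) (complete bipartite K_{k,2k+1} with one extra edge added inside the part of size 2k+1) contains every tree on 2k+2 vertices as a subgraph, for k ≥ 1. -/
open SimpleGraph Finset

section Aux

lemma tree_path_length {V : Type*} [DecidableEq V] {G : SimpleGraph V} (hG : G.IsAcyclic) {a b : V}
    (p : G.Walk a b) (hp : p.IsPath) : p.length = G.dist a b := by
  have hreach : G.Reachable a b := ⟨p⟩
  obtain ⟨q, hq⟩ := hreach.exists_walk_length_eq_dist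
  have h1 : G.dist a b ≤ p.length := SimpleGraph.dist_le p
  have h2 : q.bypass.length ≤ G.dist a b := hq ▸ q.length_bypass_le
  have h3 := hG.path_unique ⟨p, hp⟩ ⟨q.bypass, q.bypass_isPath⟩
  have : p.length = q.bypass.length := by rw [Subtype.ext_iff] at h3; simp at h3; rw [h3]
  omega

lemma tree_adj_dist {V : Type*} [DecidableEq V] {G : SimpleGraph V} (hG : G.IsAcyclic) (hc : G.Connected)
    (r : V) {u v : V} (h : G.Adj u v) :
    G.dist r v = G.dist r u + 1 ∨ G.dist r u = G.dist r v + 1 := by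
  obtain ⟨p0⟩ := hc.preconnected r u
  set p := p0.bypass with hpdef
  have hp : p.IsPath := p0.bypass_isPath
  by_cases hv : v ∈ p.support
  · right
    have hpre : (p.takeUntil v hv).IsPath := hp.takeUntil hv
    have hsuf : (p.dropUntil v hv).IsPath := hp.dropUntil hv
    have hedge : (SimpleGraph.Walk.cons h.symm SimpleGraph.Walk.nil : G.Walk v u).IsPath := by
      simp [SimpleGraph.Walk.cons_isPath_iff, h.ne']
    have huniq := hG.path_unique ⟨p.dropUntil v hv, hsuf⟩ ⟨SimpleGraph.Walk.cons h.symm SimpleGraph.Walk.nil, hedge⟩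
    have hlen1 : (p.dropUntil v hv).length = 1 := by
      rw [Subtype.ext_iff] at huniq; simp at huniq; rw [huniq]; simp
    have hsplit := p.take_spec hv
    have hlen : (p.takeUntil v hv).length + (p.dropUntil v hv).length = p.length := by
      rw [← SimpleGraph.Walk.length_append, hsplit]
    have e1 : p.length = G.dist r u := tree_path_length hG p hp
    have e2 : (p.takeUntil v hv).length = G.dist r v := tree_path_length hG _ hpre
    omega
  · left
    have hq : (SimpleGraph.Walk.cons h.symm p.reverse : G.Walk v r).IsPath := by
      refine hp.reverse.cons ?_
      simpa using hv
    have e1 : p.length = G.dist r u := tree_path_length hG p hp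
    have e2 : (SimpleGraph.Walk.cons h.symm p.reverse).length = G.dist v r :=
      tree_path_length hG _ hq
    simp [SimpleGraph.Walk.length_reverse] at e2
    rw [SimpleGraph.dist_comm] at e2
    omega


lemma exists_leaf_s9 {n : ℕ} (hn : 2 ≤ n) (T : SimpleGraph (Fin n)) (hT : T.IsTree) :
    ∃ v u, T.Adj v u ∧ ∀ w, T.Adj v w → w = u := by
  classical
  have hconn := hT.isConnected
  have hdeg1 : ∀ v : Fin n, 1 ≤ T.degree v := by
    intro v
    obtain ⟨w, hw⟩ := Fintype.exists_ne_of_one_lt_card (by simp; omega) v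
    obtain ⟨p⟩ := hconn.preconnected v w
    cases p with
    | nil => exact absurd rfl hw.symm
    | cons h q =>
      rw [Nat.one_le_iff_ne_zero, ← Nat.pos_iff_ne_zero, T.degree_pos_iff_exists_adj]
      exact ⟨_, h⟩
  have hsum : ∑ v, T.degree v = 2 * (n - 1) := by
    rw [T.sum_degrees_eq_twice_card_edges]
    have := hT.card_edgeFinset
    simp only [Fintype.card_fin] at this
    omega
  have : ∃ v : Fin n, T.degree v ≤ 1 := by
    by_contra hcon
    push_neg at hcon
    have : ∑ v : Fin n, 2 ≤ ∑ v, T.degree v := Finset.sum_le_sum fun i _ => hcon i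
    simp at this
    omega
  obtain ⟨v, hv⟩ := this
  have hdv : T.degree v = 1 := le_antisymm hv (hdeg1 v)
  rw [SimpleGraph.degree, Finset.card_eq_one] at hdv
  obtain ⟨u, hu⟩ := hdv
  refine ⟨v, u, ?_, ?_⟩
  · rw [← SimpleGraph.mem_neighborFinset, hu]; simp
  · intro w hw
    have : w ∈ T.neighborFinset v := (SimpleGraph.mem_neighborFinset _ _ _).2 hw
    rw [hu] at this; simpa using this

/-- `K_k ∨ ((2k-1)K_1 ∪ K_2)` on `3k+1` vertices: the first `k` vertices form a clique
joined to everything, and among the remaining `2k+1` vertices there is exactly one edge,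
between vertices `k` and `k+1`. -/
def KkJoinOneEdge (k : ℕ) : SimpleGraph (Fin (3 * k + 1)) where
  Adj v w := v ≠ w ∧ (v.val < k ∨ w.val < k ∨
      (v.val = k ∧ w.val = k + 1) ∨ (v.val = k + 1 ∧ w.val = k))
  symm := ⟨by intro v w h; refine ⟨h.1.symm, ?_⟩; tauto⟩
  loopless := ⟨fun _ h => h.1 rfl⟩

lemma embed_easy (k : ℕ) (hk : 1 ≤ k) (T : SimpleGraph (Fin (2 * k + 2)))
    (c : Fin (2 * k + 2) → Bool) (hc : ∀ u v, T.Adj u v → c u ≠ c v)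
    (hcard : (univ.filter (fun v => c v = true)).card ≤ k)
    (hcard2 : 1 ≤ (univ.filter (fun v => c v = true)).card) :
    ContainsCopy T (KkJoinOneEdge k) := by
  classical
  set s : Finset (Fin (2 * k + 2)) := univ.filter (fun v => c v = true) with hs
  have hscompl : sᶜ.card = 2 * k + 2 - s.card := by
    rw [Finset.card_compl]; simp
  set m := s.card with hm
  set m' := sᶜ.card with hm'
  have hm'le : m' ≤ 2 * k + 1 := by omega
  let eA : Fin m ≃o s := s.orderIsoOfFin rfl
  let eB : Fin m' ≃o (sᶜ : Finset _) := sᶜ.orderIsoOfFin rfl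
  let f : Fin (2 * k + 2) → Fin (3 * k + 1) := fun x =>
    if h : x ∈ s then ⟨(eA.symm ⟨x, h⟩).val, by have := (eA.symm ⟨x, h⟩).isLt; omega⟩
    else ⟨k + (eB.symm ⟨x, by simpa using h⟩).val, by
      have := (eB.symm ⟨x, by simpa using h⟩).isLt; omega⟩
  have hrange : ∀ x (h : x ∈ s), (f x).val < k := by
    intro x h
    simp only [f, dif_pos h]
    have := (eA.symm ⟨x, h⟩).isLt; omega
  have hinj : Function.Injective f := by
    intro a b hab
    by_cases ha : a ∈ s <;> by_cases hb : b ∈ s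
    · simp only [f, dif_pos ha, dif_pos hb, Fin.mk.injEq] at hab
      have : eA.symm ⟨a, ha⟩ = eA.symm ⟨b, hb⟩ := Fin.val_injective hab
      have := eA.symm.injective this
      exact congrArg Subtype.val this
    · exfalso
      have h1 := hrange a ha
      simp only [f, dif_pos ha, dif_neg hb, Fin.mk.injEq] at hab
      omega
    · exfalso
      have h1 := hrange b hb
      simp only [f, dif_neg ha, dif_pos hb, Fin.mk.injEq] at hab
      omega
    · simp only [f, dif_neg ha, dif_neg hb, Fin.mk.injEq] at hab
      have : eB.symm ⟨a, by simpa using ha⟩ = eB.symm ⟨b, by simpa using hb⟩ :=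
        Fin.val_injective (by omega)
      have := eB.symm.injective this
      exact congrArg Subtype.val this
  refine ⟨f, hinj, fun a b hab => ?_⟩
  show f a ≠ f b ∧ _
  refine ⟨fun he => (T.ne_of_adj hab) (hinj he), ?_⟩
  have := hc a b hab
  by_cases ha : a ∈ s
  · exact Or.inl (hrange a ha)
  · have hb : b ∈ s := by
      simp only [s, mem_filter, mem_univ, true_and] at ha ⊢
      cases hcb : c b
      · exfalso; rw [Bool.not_eq_true] at ha; rw [ha, hcb] at this; exact this rfl
      · rfl
    exact Or.inr (Or.inl (hrange b hb))

lemma embed_tight (k : ℕ) (hk : 1 ≤ k) (T : SimpleGraph (Fin (2 * k + 2)))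
    (c : Fin (2 * k + 2) → Bool) (hc : ∀ a b, T.Adj a b → c a ≠ c b)
    (v u : Fin (2 * k + 2)) (hadj : T.Adj v u) (hleaf : ∀ w, T.Adj v w → w = u)
    (hcv : c v = true)
    (hcard : (univ.filter (fun x => c x = true)).card = k + 1) :
    ContainsCopy T (KkJoinOneEdge k) := by
  classical
  have hcu : c u = false := by
    have := hc v u hadj; rw [hcv] at this
    cases h : c u with
    | false => rfl
    | true => rw [h] at this; exact absurd rfl this
  have hvu : v ≠ u := T.ne_of_adj hadj
  set s1 : Finset (Fin (2 * k + 2)) := univ.filter (fun x => c x = true) with hs1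
  set s0 : Finset (Fin (2 * k + 2)) := univ.filter (fun x => c x = false) with hs0
  have hsum : s1.card + s0.card = 2 * k + 2 := by
    have h := Finset.card_filter_add_card_filter_not
      (s := (univ : Finset (Fin (2 * k + 2)))) (p := fun x => c x = true)
    have he : univ.filter (fun x => ¬ (c x = true)) = s0 := by
      apply Finset.filter_congr; intro x _; simp
    rw [he] at h; simpa using h
  have hs0card : s0.card = k + 1 := by omega
  set A : Finset (Fin (2 * k + 2)) := s1.erase v with hA
  set B : Finset (Fin (2 * k + 2)) := s0.erase u with hB
  have hvs1 : v ∈ s1 := by simp [hs1, hcv]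
  have hus0 : u ∈ s0 := by simp [hs0, hcu]
  have hAcard : A.card = k := by rw [hA, Finset.card_erase_of_mem hvs1, hcard]; omega
  have hBcard : B.card = k := by rw [hB, Finset.card_erase_of_mem hus0, hs0card]; omega
  have memB : ∀ x : Fin (2 * k + 2), x ≠ v → x ≠ u → x ∉ A → x ∈ B := by
    intro x hxv hxu hxA
    have hxs1 : x ∉ s1 := fun h => hxA (Finset.mem_erase.2 ⟨hxv, h⟩)
    have hcx : c x = false := by
      simp only [hs1, mem_filter, mem_univ, true_and] at hxs1
      simpa using hxs1
    exact Finset.mem_erase.2 ⟨hxu, by simp [hs0, hcx]⟩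
  let eA : Fin k ≃o A := A.orderIsoOfFin hAcard
  let eB : Fin k ≃o B := B.orderIsoOfFin hBcard
  let f : Fin (2 * k + 2) → Fin (3 * k + 1) := fun x =>
    if hxv : x = v then ⟨k + 1, by omega⟩
    else if hxu : x = u then ⟨k, by omega⟩
    else if h : x ∈ A then ⟨(eA.symm ⟨x, h⟩).val, by have := (eA.symm ⟨x, h⟩).isLt; omega⟩
    else ⟨k + 2 + (eB.symm ⟨x, memB x hxv hxu h⟩).val, by
      have := (eB.symm ⟨x, memB x hxv hxu h⟩).isLt; omega⟩
  have hfv : (f v).val = k + 1 := by simp [f]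
  have hfu : (f u).val = k := by simp [f, hvu.symm]
  have hAne : ∀ x ∈ A, x ≠ v ∧ x ≠ u := by
    intro x hx
    have h1 := (Finset.mem_erase.1 hx).1
    have h2 : c x = true := by
      have := (Finset.mem_erase.1 hx).2
      simpa [hs1] using this
    exact ⟨h1, fun h => by rw [h, hcu] at h2; exact Bool.false_ne_true h2⟩
  have hfA : ∀ x (h : x ∈ A), (f x).val = (eA.symm ⟨x, h⟩).val ∧ (f x).val < k := by
    intro x h
    obtain ⟨h1, h2⟩ := hAne x h
    simp only [f, dif_neg h1, dif_neg h2, dif_pos h]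
    exact ⟨trivial, by have := (eA.symm ⟨x, h⟩).isLt; omega⟩
  have hfB : ∀ x (h1 : x ≠ v) (h2 : x ≠ u) (h3 : x ∉ A),
      (f x).val = k + 2 + (eB.symm ⟨x, memB x h1 h2 h3⟩).val ∧
      k + 2 ≤ (f x).val ∧ (f x).val < 2 * k + 2 := by
    intro x h1 h2 h3
    simp only [f, dif_neg h1, dif_neg h2, dif_neg h3]
    refine ⟨trivial, by omega, ?_⟩
    have := (eB.symm ⟨x, memB x h1 h2 h3⟩).isLt; omega
  have hinj : Function.Injective f := by
    intro a b hab
    have hab' : (f a).val = (f b).val := congrArg Fin.val hab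
    have cases4 : ∀ x : Fin (2 * k + 2), x = v ∨ x = u ∨ x ∈ A ∨ (x ≠ v ∧ x ≠ u ∧ x ∉ A) := by
      intro x; tauto
    rcases cases4 a with ha|ha|ha|ha <;> rcases cases4 b with hb|hb|hb|hb
    · rw [ha, hb]
    · exfalso; rw [ha, hb, hfv, hfu] at hab'; omega
    · exfalso; rw [ha, hfv] at hab'; have := (hfA b hb).2; omega
    · exfalso; rw [ha, hfv] at hab'; have := (hfB b hb.1 hb.2.1 hb.2.2).2; omega
    · exfalso; rw [ha, hb, hfu, hfv] at hab'; omega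
    · rw [ha, hb]
    · exfalso; rw [ha, hfu] at hab'; have := (hfA b hb).2; omega
    · exfalso; rw [ha, hfu] at hab'; have := (hfB b hb.1 hb.2.1 hb.2.2).2; omega
    · exfalso; rw [hb, hfv] at hab'; have := (hfA a ha).2; omega
    · exfalso; rw [hb, hfu] at hab'; have := (hfA a ha).2; omega
    · have h1 := (hfA a ha).1
      have h2 := (hfA b hb).1
      rw [h1, h2] at hab'
      have heq : eA.symm ⟨a, ha⟩ = eA.symm ⟨b, hb⟩ := Fin.val_injective hab'
      have := eA.symm.injective heq
      exact congrArg Subtype.val this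
    · exfalso
      have := (hfA a ha).2
      have := (hfB b hb.1 hb.2.1 hb.2.2).2
      omega
    · exfalso; rw [hb, hfv] at hab'; have := (hfB a ha.1 ha.2.1 ha.2.2).2; omega
    · exfalso; rw [hb, hfu] at hab'; have := (hfB a ha.1 ha.2.1 ha.2.2).2; omega
    · exfalso
      have := (hfB a ha.1 ha.2.1 ha.2.2).2
      have := (hfA b hb).2
      omega
    · have h1 := (hfB a ha.1 ha.2.1 ha.2.2).1
      have h2 := (hfB b hb.1 hb.2.1 hb.2.2).1
      have heq : eB.symm ⟨a, memB a ha.1 ha.2.1 ha.2.2⟩ = eB.symm ⟨b, memB b hb.1 hb.2.1 hb.2.2⟩ :=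
        Fin.val_injective (by omega)
      have := eB.symm.injective heq
      exact congrArg Subtype.val this
  refine ⟨f, hinj, fun a b hab => ?_⟩
  show f a ≠ f b ∧ _
  refine ⟨fun he => (T.ne_of_adj hab) (hinj he), ?_⟩
  by_cases hav : a = v
  · have hbu : b = u := hleaf b (hav ▸ hab)
    right; right; right
    rw [hav, hbu, hfv, hfu]; exact ⟨rfl, rfl⟩
  · by_cases hbv : b = v
    · have hau : a = u := hleaf a (hbv ▸ hab.symm)
      right; right; left
      rw [hau, hbv, hfu, hfv]; exact ⟨rfl, rfl⟩
    · have hcab := hc a b hab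
      by_cases hca : c a = true
      · have haA : a ∈ A := Finset.mem_erase.2 ⟨hav, by simp [hs1, hca]⟩
        exact Or.inl (hfA a haA).2
      · have hca' : c a = false := by simpa using hca
        have hcb : c b = true := by
          cases h : c b
          · rw [hca', h] at hcab; exact absurd rfl hcab
          · rfl
        have hbA : b ∈ A := Finset.mem_erase.2 ⟨hbv, by simp [hs1, hcb]⟩
        exact Or.inr (Or.inl (hfA b hbA).2)

end Aux

/-- `K_k ∨ ((2k-1)K_1 ∪ K_2)` contains every tree on `2k+2` vertices, k ≥ 1. -/

theorem stmt9 (k : ℕ) (hk : 1 ≤ k) (T : SimpleGraph (Fin (2 * k + 2))) (hT : T.IsTree) :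
    ContainsCopy T (KkJoinOneEdge k) := by
  classical
  have hac := hT.IsAcyclic
  have hconn := hT.isConnected
  set v0 : Fin (2 * k + 2) := ⟨0, by omega⟩ with hv0
  set c : Fin (2 * k + 2) → Bool := fun x => decide (T.dist v0 x % 2 = 1) with hcdef
  have hc : ∀ a b, T.Adj a b → c a ≠ c b := by
    intro a b hab
    have h := tree_adj_dist hac hconn v0 hab
    intro hcc
    rcases Nat.mod_two_eq_zero_or_one (T.dist v0 a) with h1 | h1 <;>
      rcases Nat.mod_two_eq_zero_or_one (T.dist v0 b) with h2 | h2 <;>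
      simp [hcdef, h1, h2] at hcc ⊢ <;> omega
  obtain ⟨v, u, hadj, hleaf⟩ := exists_leaf_s9 (by omega) T hT
  have hcvu : c v ≠ c u := hc v u hadj
  set s1 : Finset (Fin (2 * k + 2)) := Finset.univ.filter (fun x => c x = true) with hs1
  set s0 : Finset (Fin (2 * k + 2)) := Finset.univ.filter (fun x => c x = false) with hs0
  have hsum : s1.card + s0.card = 2 * k + 2 := by
    have h := Finset.card_filter_add_card_filter_not
      (s := (Finset.univ : Finset (Fin (2 * k + 2)))) (p := fun x => c x = true)
    have he : Finset.univ.filter (fun x => ¬ (c x = true)) = s0 := by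
      apply Finset.filter_congr; intro x _; simp
    rw [he] at h; simpa using h
  have hs1ne : 1 ≤ s1.card := by
    rcases Bool.eq_false_or_eq_true (c v) with hcv | hcv
    · have : v ∈ s1 := by simp [hs1, hcv]
      exact Finset.card_pos.2 ⟨v, this⟩
    · have hcu : c u = true := by
        rcases Bool.eq_false_or_eq_true (c u) with h | h
        · exact h
        · exact absurd (hcv.trans h.symm) hcvu
      have : u ∈ s1 := by simp [hs1, hcu]
      exact Finset.card_pos.2 ⟨u, this⟩
  have hs0ne : 1 ≤ s0.card := by
    rcases Bool.eq_false_or_eq_true (c v) with hcv | hcv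
    · have hcu : c u = false := by
        rcases Bool.eq_false_or_eq_true (c u) with h | h
        · exact absurd (hcv.trans h.symm) hcvu
        · exact h
      have : u ∈ s0 := by simp [hs0, hcu]
      exact Finset.card_pos.2 ⟨u, this⟩
    · have : v ∈ s0 := by simp [hs0, hcv]
      exact Finset.card_pos.2 ⟨v, this⟩
  have hfilterflip : Finset.univ.filter (fun x => (!(c x)) = true) = s0 := by
    apply Finset.filter_congr; intro x _; simp
  have hcflip : ∀ a b, T.Adj a b → (!(c a)) ≠ (!(c b)) := by
    intro a b hab h
    exact hc a b hab (by simpa using h)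
  by_cases h1 : s1.card ≤ k
  · exact embed_easy k hk T c hc h1 hs1ne
  · by_cases h0 : s0.card ≤ k
    · refine embed_easy k hk T (fun x => !(c x)) hcflip ?_ ?_
      · rw [hfilterflip]; exact h0
      · rw [hfilterflip]; exact hs0ne
    · have hc1 : s1.card = k + 1 := by omega
      have hc0 : s0.card = k + 1 := by omega
      rcases Bool.eq_false_or_eq_true (c v) with hcv | hcv
      · exact embed_tight k hk T c hc v u hadj hleaf hcv hc1
      · refine embed_tight k hk T (fun x => !(c x)) hcflip v u hadj hleaf (by simp [hcv]) ?_
        rw [hfilterflip]; exact hc0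
end

section
/- The graph K_k ∨ ((2k-1)K_1 ∪ P_3), obtained from K_{k,2k+2} by adding a path on 3 vertices inside the part of size 2k+2, contains every tree on 2k+3 vertices as a subgraph, for k ≥ 1. -/
/-- `K_k ∨ ((2k-1)K_1 ∪ P_3)` on `3k+2` vertices: the first `k` vertices form a clique
joined to everything, and among the remaining `2k+2` vertices the only edges are those of
the path `k — (k+1) — (k+2)`. -/
def KkJoinPathThree (k : ℕ) : SimpleGraph (Fin (3 * k + 2)) where
  Adj v w := v ≠ w ∧ (v.val < k ∨ w.val < k ∨
      (v.val = k ∧ w.val = k + 1) ∨ (v.val = k + 1 ∧ w.val = k) ∨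
      (v.val = k + 1 ∧ w.val = k + 2) ∨ (v.val = k + 2 ∧ w.val = k + 1))
  symm := ⟨by intro v w h; refine ⟨h.1.symm, ?_⟩; tauto⟩
  loopless := ⟨fun _ h => h.1 rfl⟩

open SimpleGraph Finset

private lemma path_length_eq_dist' {V : Type*} [DecidableEq V] {G : SimpleGraph V} (hT : G.IsTree)
    {r v : V} (p : G.Walk r v) (hp : p.IsPath) : p.length = G.dist r v := by
  obtain ⟨q, hq⟩ := hT.isConnected.exists_walk_length_eq_dist r v
  have h1 : q.toPath = (⟨p, hp⟩ : G.Path r v) := hT.IsAcyclic.path_unique _ _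
  have h4 : q.bypass = p := congrArg Subtype.val h1
  have h2 : q.bypass.length ≤ q.length := q.length_bypass_le
  rw [h4] at h2
  have h3 : G.dist r v ≤ p.length := SimpleGraph.dist_le p
  omega

private lemma adj_dist_eq' {V : Type*} [DecidableEq V] {G : SimpleGraph V} (hT : G.IsTree) (r : V)
    {u v : V} (ha : G.Adj u v) :
    G.dist r v = G.dist r u + 1 ∨ G.dist r u = G.dist r v + 1 := by
  obtain ⟨q, hq⟩ := hT.isConnected.exists_walk_length_eq_dist r u
  set p := q.bypass with hpdef
  have hp : p.IsPath := q.bypass_isPath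
  have hplen : p.length = G.dist r u := path_length_eq_dist' hT p hp
  by_cases hv : v ∈ p.support
  · right
    have ht : (p.takeUntil v hv).IsPath := hp.takeUntil hv
    have hd : (p.dropUntil v hv).IsPath := hp.dropUntil hv
    have hsingle : (Walk.cons ha.symm Walk.nil : G.Walk v u).IsPath := by
      simp [Walk.cons_isPath_iff, ha.ne']
    have huniq := hT.IsAcyclic.path_unique ⟨p.dropUntil v hv, hd⟩
      ⟨Walk.cons ha.symm Walk.nil, hsingle⟩
    have hlen2 : (p.dropUntil v hv).length = 1 := by
      have := congrArg (fun w : G.Path v u => (w : G.Walk v u).length) huniq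
      simpa using this
    have hsplit : (p.takeUntil v hv).length + (p.dropUntil v hv).length = p.length := by
      rw [← Walk.length_append, Walk.take_spec]
    have htlen : (p.takeUntil v hv).length = G.dist r v := path_length_eq_dist' hT _ ht
    omega
  · left
    have hpath : (Walk.cons ha.symm p.reverse).IsPath := by
      rw [Walk.cons_isPath_iff]
      exact ⟨hp.reverse, by simpa using hv⟩
    have hrev : (Walk.cons ha.symm p.reverse).reverse.IsPath := hpath.reverse
    have hlen : (Walk.cons ha.symm p.reverse).reverse.length = p.length + 1 := by simp
    have := path_length_eq_dist' hT _ hrev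
    omega

private lemma tree_coloring' {V : Type*} [DecidableEq V] {G : SimpleGraph V} (hT : G.IsTree) (r : V)
    {u v : V} (ha : G.Adj u v) :
    Nat.bodd (G.dist r u) ≠ Nat.bodd (G.dist r v) := by
  rcases adj_dist_eq' hT r ha with h | h <;> rw [h] <;>
    simp [Nat.bodd_succ]

/-- `K_k ∨ ((2k-1)K_1 ∪ P_3)` contains every tree on `2k+3` vertices, k ≥ 1. -/
theorem stmt10 (k : ℕ) (hk : 1 ≤ k) (T : SimpleGraph (Fin (2 * k + 3))) (hT : T.IsTree) :
    ContainsCopy T (KkJoinPathThree k) := by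
  classical
  set r : Fin (2 * k + 3) := ⟨0, by omega⟩ with hr
  set c : Fin (2 * k + 3) → Bool := fun x => Nat.bodd (T.dist r x) with hc
  have hcadj : ∀ u v, T.Adj u v → c u ≠ c v := fun u v h => tree_coloring' hT r h
  -- choose the small color class
  obtain ⟨A, hAcard, hAadj⟩ : ∃ A : Finset (Fin (2 * k + 3)), A.card ≤ k + 1 ∧
      ∀ u v, T.Adj u v → (u ∈ A ↔ v ∉ A) := by
    set s : Finset (Fin (2 * k + 3)) := Finset.univ.filter (fun x => c x = true) with hs
    have hbool : ∀ a b : Bool, a ≠ b → (a = true ↔ ¬(b = true)) := by decide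
    have hsadj : ∀ u v, T.Adj u v → (u ∈ s ↔ v ∉ s) := by
      intro u v h
      simp only [hs, Finset.mem_filter, Finset.mem_univ, true_and]
      exact hbool _ _ (hcadj u v h)
    have hsum : s.card + sᶜ.card = 2 * k + 3 := by
      rw [Finset.card_add_card_compl]; simp
    by_cases hle : s.card ≤ k + 1
    · exact ⟨s, hle, hsadj⟩
    · refine ⟨sᶜ, by omega, fun u v h => ?_⟩
      have := hsadj u v h
      simp only [Finset.mem_compl]
      tauto
  -- basic counting facts
  have hE : T.edgeFinset.card = 2 * k + 2 := by
    have := hT.card_edgeFinset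
    simp only [Fintype.card_fin] at this
    omega
  have hdeg1 : ∀ x : Fin (2 * k + 3), 0 < T.degree x := by
    intro x
    rw [T.degree_pos_iff_exists_adj x]
    have hne : x ≠ (⟨if x.val = 0 then 1 else 0, by split_ifs <;> omega⟩ : Fin (2 * k + 3)) := by
      intro h
      have h' : x.val = (if x.val = 0 then 1 else 0) := congrArg Fin.val h
      split_ifs at h' <;> omega
    obtain ⟨y, hxy⟩ : ∃ y : Fin (2 * k + 3), x ≠ y := ⟨_, hne⟩
    obtain ⟨p⟩ := hT.isConnected x y
    cases p with
    | nil => exact absurd rfl hxy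
    | cons h q => exact ⟨_, h⟩
  have hA1 : 1 ≤ A.card := by
    obtain ⟨w, hw⟩ := (T.degree_pos_iff_exists_adj r).1 (hdeg1 r)
    have h := hAadj r w hw
    by_cases h1 : r ∈ A
    · exact Finset.card_pos.2 ⟨r, h1⟩
    · exact Finset.card_pos.2 ⟨w, by tauto⟩
  have hAc : Aᶜ.card = 2 * k + 3 - A.card := by
    rw [Finset.card_compl]; simp
  by_cases hAk : A.card ≤ k
  · -- easy case : A fits inside the clique
    set iA : Fin (2 * k + 3) → ℕ := fun x => A.toList.idxOf x with hiAdef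
    set iB : Fin (2 * k + 3) → ℕ := fun x => Aᶜ.toList.idxOf x with hiBdef
    have hiA : ∀ x ∈ A, iA x < k := by
      intro x hx
      have : iA x < A.toList.length := List.idxOf_lt_length_iff.2 (Finset.mem_toList.2 hx)
      rw [Finset.length_toList] at this; omega
    have hiB : ∀ x ∈ Aᶜ, iB x < 2 * k + 2 := by
      intro x hx
      have : iB x < Aᶜ.toList.length := List.idxOf_lt_length_iff.2 (Finset.mem_toList.2 hx)
      rw [Finset.length_toList] at this; omega
    have hiAinj : ∀ x ∈ A, ∀ y ∈ A, iA x = iA y → x = y := fun x hx y hy h =>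
      (List.idxOf_inj (Finset.mem_toList.2 hx) (y := y)).1 h
    have hiBinj : ∀ x ∈ Aᶜ, ∀ y ∈ Aᶜ, iB x = iB y → x = y := fun x hx y hy h =>
      (List.idxOf_inj (Finset.mem_toList.2 hx) (y := y)).1 h
    obtain ⟨g, hg⟩ : ∃ g : Fin (2 * k + 3) → ℕ,
        ∀ x, g x = if x ∈ A then iA x else k + iB x := ⟨_, fun _ => rfl⟩
    have hgA : ∀ x ∈ A, g x = iA x := by intro x hx; rw [hg, if_pos hx]
    have hgB : ∀ x ∈ Aᶜ, g x = k + iB x := by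
      intro x hx; rw [hg, if_neg (Finset.mem_compl.1 hx)]
    have hb : ∀ x, g x < 3 * k + 2 := by
      intro x
      by_cases hx : x ∈ A
      · have := hiA x hx; rw [hgA x hx]; omega
      · have hx' : x ∈ Aᶜ := Finset.mem_compl.2 hx
        have := hiB x hx'; rw [hgB x hx']; omega
    have ginj : ∀ x y, g x = g y → x = y := by
      intro x y h
      by_cases hx : x ∈ A <;> by_cases hy : y ∈ A
      · exact hiAinj x hx y hy (by rw [hgA x hx, hgA y hy] at h; exact h)
      · exfalso
        have hy' : y ∈ Aᶜ := Finset.mem_compl.2 hy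
        rw [hgA x hx, hgB y hy'] at h
        have := hiA x hx; omega
      · exfalso
        have hx' : x ∈ Aᶜ := Finset.mem_compl.2 hx
        rw [hgB x hx', hgA y hy] at h
        have := hiA y hy; omega
      · have hx' : x ∈ Aᶜ := Finset.mem_compl.2 hx
        have hy' : y ∈ Aᶜ := Finset.mem_compl.2 hy
        exact hiBinj x hx' y hy' (by rw [hgB x hx', hgB y hy'] at h; omega)
    refine ⟨fun x => ⟨g x, hb x⟩, fun x y h => ginj x y (congrArg Fin.val h), ?_⟩
    have key : ∀ p q : Fin (2 * k + 3), T.Adj p q → p ∈ A →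
        (KkJoinPathThree k).Adj ⟨g p, hb p⟩ ⟨g q, hb q⟩ := by
      intro p q hpq hpA
      refine ⟨fun hcon => hpq.ne (ginj p q (congrArg Fin.val hcon)), ?_⟩
      have h1 := hgA p hpA
      have h2 := hiA p hpA
      left
      show g p < k
      omega
    intro x y hadj
    by_cases hx : x ∈ A
    · exact key x y hadj hx
    · have hy : y ∈ A := by have := hAadj x y hadj; tauto
      exact (key y x hadj.symm hy).symm
  · -- hard case : |A| = k + 1
    have hAcard' : A.card = k + 1 := by omega
    -- find a vertex of A of degree at most 2
    have hsum := T.sum_degrees_eq_twice_card_edges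
    obtain ⟨v, hvA, hvdeg⟩ : ∃ v ∈ A, T.degree v ≤ 2 := by
      by_contra hcon
      push_neg at hcon
      have h2 : A.card • 3 ≤ ∑ w ∈ A, T.degree w :=
        Finset.card_nsmul_le_sum A _ 3 (fun x hx => hcon x hx)
      have h3 : Aᶜ.card • 1 ≤ ∑ w ∈ Aᶜ, T.degree w :=
        Finset.card_nsmul_le_sum Aᶜ _ 1 (fun x _ => hdeg1 x)
      have h4 : ∑ w ∈ A, T.degree w + ∑ w ∈ Aᶜ, T.degree w = ∑ w, T.degree w :=
        Finset.sum_add_sum_compl A _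
      simp only [smul_eq_mul] at h2 h3
      omega
    set N : Finset (Fin (2 * k + 3)) := T.neighborFinset v with hN
    set d : ℕ := N.card with hd
    have hddeg : d = T.degree v := rfl
    have hd1 : 1 ≤ d := by have := hdeg1 v; omega
    have hd2 : d ≤ 2 := by omega
    have hNA : ∀ y ∈ N, y ∉ A := by
      intro y hy
      have hadj : T.Adj v y := (T.mem_neighborFinset v y).1 hy
      exact (hAadj v y hadj).1 hvA
    have hNsub : N ⊆ Aᶜ := fun y hy => Finset.mem_compl.2 (hNA y hy)
    set A' : Finset (Fin (2 * k + 3)) := A.erase v with hA'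
    have hA'card : A'.card = k := by
      rw [hA', Finset.card_erase_of_mem hvA, hAcard']
      omega
    set R : Finset (Fin (2 * k + 3)) := Aᶜ \ N with hR
    have hRcard : R.card = k + 2 - d := by
      rw [hR, Finset.card_sdiff_of_subset hNsub, hAc, hAcard']
      omega
    set iA : Fin (2 * k + 3) → ℕ := fun x => A'.toList.idxOf x with hiAdef
    set iN : Fin (2 * k + 3) → ℕ := fun x => N.toList.idxOf x with hiNdef
    set iR : Fin (2 * k + 3) → ℕ := fun x => R.toList.idxOf x with hiRdef
    have hiA : ∀ x ∈ A', iA x < k := by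
      intro x hx
      have : iA x < A'.toList.length := List.idxOf_lt_length_iff.2 (Finset.mem_toList.2 hx)
      rw [Finset.length_toList, hA'card] at this; omega
    have hiN : ∀ x ∈ N, iN x < d := by
      intro x hx
      have : iN x < N.toList.length := List.idxOf_lt_length_iff.2 (Finset.mem_toList.2 hx)
      rw [Finset.length_toList] at this; omega
    have hiR : ∀ x ∈ R, iR x < k + 2 - d := by
      intro x hx
      have : iR x < R.toList.length := List.idxOf_lt_length_iff.2 (Finset.mem_toList.2 hx)
      rw [Finset.length_toList, hRcard] at this; omega
    have hiAinj : ∀ x ∈ A', ∀ y ∈ A', iA x = iA y → x = y := fun x hx y hy h =>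
      (List.idxOf_inj (Finset.mem_toList.2 hx) (y := y)).1 h
    have hiNinj : ∀ x ∈ N, ∀ y ∈ N, iN x = iN y → x = y := fun x hx y hy h =>
      (List.idxOf_inj (Finset.mem_toList.2 hx) (y := y)).1 h
    have hiRinj : ∀ x ∈ R, ∀ y ∈ R, iR x = iR y → x = y := fun x hx y hy h =>
      (List.idxOf_inj (Finset.mem_toList.2 hx) (y := y)).1 h
    obtain ⟨g, hg⟩ : ∃ g : Fin (2 * k + 3) → ℕ,
        ∀ x, g x = if x = v then k + 1 else if x ∈ A then iA x
          else if x ∈ N then k + 2 * iN x else k + d + 1 + iR x := ⟨_, fun _ => rfl⟩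
    have hclass : ∀ x : Fin (2 * k + 3), x = v ∨ x ∈ A' ∨ x ∈ N ∨ x ∈ R := by
      intro x
      by_cases h1 : x = v
      · exact Or.inl h1
      by_cases h2 : x ∈ A
      · exact Or.inr (Or.inl (Finset.mem_erase.2 ⟨h1, h2⟩))
      by_cases h3 : x ∈ N
      · exact Or.inr (Or.inr (Or.inl h3))
      · exact Or.inr (Or.inr (Or.inr (Finset.mem_sdiff.2 ⟨Finset.mem_compl.2 h2, h3⟩)))
    have hgv : g v = k + 1 := by rw [hg, if_pos rfl]
    have hgA : ∀ x ∈ A', g x = iA x := by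
      intro x hx
      obtain ⟨hx1, hx2⟩ := Finset.mem_erase.1 hx
      rw [hg, if_neg hx1, if_pos hx2]
    have hgN : ∀ x ∈ N, g x = k + 2 * iN x := by
      intro x hx
      have hxA : x ∉ A := hNA x hx
      have hxv : x ≠ v := fun h => hxA (h ▸ hvA)
      rw [hg, if_neg hxv, if_neg hxA, if_pos hx]
    have hgR : ∀ x ∈ R, g x = k + d + 1 + iR x := by
      intro x hx
      obtain ⟨hx1, hx2⟩ := Finset.mem_sdiff.1 hx
      have hxA : x ∉ A := Finset.mem_compl.1 hx1
      have hxv : x ≠ v := fun h => hxA (h ▸ hvA)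
      rw [hg, if_neg hxv, if_neg hxA, if_neg hx2]
    have hb : ∀ x, g x < 3 * k + 2 := by
      intro x
      rcases hclass x with h | h | h | h
      · rw [h, hgv]; omega
      · rw [hgA x h]; have := hiA x h; omega
      · rw [hgN x h]; have := hiN x h; omega
      · rw [hgR x h]; have := hiR x h; omega
    have ginj : ∀ x y, g x = g y → x = y := by
      intro x y h
      rcases hclass x with hx | hx | hx | hx <;> rcases hclass y with hy | hy | hy | hy
      · rw [hx, hy]
      · exfalso; rw [hx, hgv, hgA y hy] at h; have := hiA y hy; omega
      · exfalso; rw [hx, hgv, hgN y hy] at h; have := hiN y hy; omega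
      · exfalso; rw [hx, hgv, hgR y hy] at h; have := hiR y hy; omega
      · exfalso; rw [hy, hgv, hgA x hx] at h; have := hiA x hx; omega
      · rw [hgA x hx, hgA y hy] at h; exact hiAinj x hx y hy h
      · exfalso; rw [hgA x hx, hgN y hy] at h; have := hiA x hx; omega
      · exfalso; rw [hgA x hx, hgR y hy] at h; have := hiA x hx; omega
      · exfalso; rw [hy, hgv, hgN x hx] at h; have := hiN x hx; omega
      · exfalso; rw [hgN x hx, hgA y hy] at h; have := hiA y hy; omega
      · rw [hgN x hx, hgN y hy] at h; exact hiNinj x hx y hy (by omega)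
      · exfalso
        rw [hgN x hx, hgR y hy] at h
        have := hiN x hx; have := hiR y hy; omega
      · exfalso; rw [hy, hgv, hgR x hx] at h; have := hiR x hx; omega
      · exfalso; rw [hgR x hx, hgA y hy] at h; have := hiA y hy; omega
      · exfalso
        rw [hgR x hx, hgN y hy] at h
        have := hiN y hy; have := hiR x hx; omega
      · rw [hgR x hx, hgR y hy] at h; exact hiRinj x hx y hy (by omega)
    refine ⟨fun x => ⟨g x, hb x⟩, fun x y h => ginj x y (congrArg Fin.val h), ?_⟩
    have key : ∀ p q : Fin (2 * k + 3), T.Adj p q → p ∈ A →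
        (KkJoinPathThree k).Adj ⟨g p, hb p⟩ ⟨g q, hb q⟩ := by
      intro p q hpq hpA
      refine ⟨fun hcon => hpq.ne (ginj p q (congrArg Fin.val hcon)), ?_⟩
      show g p < k ∨ g q < k ∨ (g p = k ∧ g q = k + 1) ∨ (g p = k + 1 ∧ g q = k) ∨
        (g p = k + 1 ∧ g q = k + 2) ∨ (g p = k + 2 ∧ g q = k + 1)
      by_cases hpv : p = v
      · subst hpv
        have hqN : q ∈ N := (T.mem_neighborFinset p q).2 hpq
        have h1 := hgN q hqN
        have h2 := hiN q hqN
        rw [hgv, h1]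
        omega
      · have hp' : p ∈ A' := Finset.mem_erase.2 ⟨hpv, hpA⟩
        have h1 := hgA p hp'
        have h2 := hiA p hp'
        omega
    intro x y hadj
    by_cases hx : x ∈ A
    · exact key x y hadj hx
    · have hy : y ∈ A := by have := hAadj x y hadj; tauto
      exact (key y x hadj.symm hy).symm
end

section
/- The graph K_k ∨ ((2k-2)K_1 ∪ 2K_2), obtained from K_{k,2k+2} by adding a matching of two edges inside the part of size 2k+2, contains every tree on 2k+3 vertices as a subgraph, for k ≥ 1. -/
/-- `K_k ∨ ((2k-2)K_1 ∪ 2K_2)` on `3k+2` vertices: the first `k` vertices form a clique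
joined to everything, and among the remaining `2k+2` vertices the only edges are the
matching `{k, k+1}` and `{k+2, k+3}`. -/
def KkJoinMatching (k : ℕ) : SimpleGraph (Fin (3 * k + 2)) where
  Adj v w := v ≠ w ∧ (v.val < k ∨ w.val < k ∨
      (v.val = k ∧ w.val = k + 1) ∨ (v.val = k + 1 ∧ w.val = k) ∨
      (v.val = k + 2 ∧ w.val = k + 3) ∨ (v.val = k + 3 ∧ w.val = k + 2))
  symm := ⟨by intro v w h; refine ⟨h.1.symm, ?_⟩; tauto⟩
  loopless := ⟨fun _ h => h.1 rfl⟩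


open SimpleGraph Finset

lemma tree_coloring {V : Type*} {T : SimpleGraph V} (hT : T.IsTree) :
    ∃ c : V → Bool, ∀ ⦃u v⦄, T.Adj u v → c u ≠ c v := by
  classical
  obtain ⟨root⟩ := hT.isConnected.nonempty
  choose P hP hPu using fun v => hT.existsUnique_path v root
  refine ⟨fun v => decide ((P v).length % 2 = 1), ?_⟩
  intro u v huv
  suffices h : (P u).length = (P v).length + 1 ∨ (P v).length = (P u).length + 1 by
    rcases h with h | h <;> simp only [ne_eq, decide_eq_decide] <;> omega
  by_cases hmem : v ∈ (P u).support
  · left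
    have ht : ((P u).takeUntil v hmem).IsPath := (hP u).takeUntil hmem
    have hd : ((P u).dropUntil v hmem).IsPath := (hP u).dropUntil hmem
    have h1 : (P u).takeUntil v hmem = SimpleGraph.Walk.cons huv .nil := by
      have := hT.IsAcyclic.path_unique ⟨(P u).takeUntil v hmem, ht⟩
        ⟨SimpleGraph.Walk.cons huv .nil, Walk.IsPath.nil.cons (by simp [huv.ne])⟩
      exact congrArg Subtype.val this
    have h2 : (P u).dropUntil v hmem = P v := hPu v _ hd
    have h3 := (P u).take_spec hmem
    have := congrArg SimpleGraph.Walk.length h3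
    rw [SimpleGraph.Walk.length_append, h1, h2] at this
    simp at this
    omega
  · right
    have : (SimpleGraph.Walk.cons huv.symm (P u)).IsPath :=
      (hP u).cons hmem
    have := hPu v _ this
    have := congrArg SimpleGraph.Walk.length this
    simpa using this.symm

lemma exists_adj_of_connected {V : Type*} [Fintype V] {T : SimpleGraph V}
    (hc : T.Connected) (h2 : 1 < Fintype.card V) (v : V) : ∃ w, T.Adj v w := by
  obtain ⟨w, hw⟩ := Fintype.exists_ne_of_one_lt_card h2 v
  obtain ⟨p⟩ := hc v w
  cases p with
  | nil => exact absurd rfl hw.symm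
  | cons h _ => exact ⟨_, h⟩

lemma reachable_mem_of_closed {V : Type*} {T : SimpleGraph V} {S : Set V}
    (hS : ∀ u ∈ S, ∀ w, T.Adj u w → w ∈ S) {v w : V} (hv : v ∈ S)
    (h : T.Reachable v w) : w ∈ S := by
  obtain ⟨p⟩ := h
  induction p with
  | nil => exact hv
  | cons h p ih => exact ih (hS _ hv _ h)

lemma sum_degree_color {V : Type*} [Fintype V] [DecidableEq V] {T : SimpleGraph V}
    [DecidableRel T.Adj] {c : V → Bool} (hc : ∀ ⦃u v⦄, T.Adj u v → c u ≠ c v) (s : Bool) :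
    ∑ v ∈ univ.filter (fun v => c v = s), T.degree v = T.edgeFinset.card := by
  classical
  rw [show (∑ v ∈ univ.filter (fun v => c v = s), T.degree v)
      = ((univ.filter (fun v => c v = s)).sigma (fun v => T.neighborFinset v)).card
      from (Finset.card_sigma _ _).symm]
  refine Finset.card_bij (fun p _ => s(p.1, p.2)) ?_ ?_ ?_
  · rintro ⟨a, b⟩ hab
    rw [Finset.mem_sigma] at hab
    rw [mem_edgeFinset]
    exact (mem_neighborFinset _ _ _).1 hab.2
  · rintro ⟨a1, a2⟩ ha ⟨b1, b2⟩ hb h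
    rw [Finset.mem_sigma, Finset.mem_filter, mem_neighborFinset] at ha hb
    simp only [Sym2.eq, Sym2.rel_iff', Prod.mk.injEq, Prod.swap_prod_mk] at h
    rcases h with ⟨rfl, rfl⟩ | ⟨rfl, rfl⟩
    · rfl
    · exact absurd (hb.1.2.trans ha.1.2.symm) (hc hb.2)
  · intro e he
    rw [mem_edgeFinset] at he
    induction e with
    | h u v =>
      rw [mem_edgeSet] at he
      by_cases hu : c u = s
      · exact ⟨⟨u, v⟩, by simp [Finset.mem_sigma, mem_neighborFinset, hu, he]⟩
      · have hv : c v = s := by have := hc he; revert hu this; cases c u <;> cases c v <;> simp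
        exact ⟨⟨v, u⟩, by simp [Finset.mem_sigma, mem_neighborFinset, hv, he.symm, Sym2.eq_swap]⟩

lemma degree_one_nbr {V : Type*} [Fintype V] [DecidableEq V] {T : SimpleGraph V}
    [DecidableRel T.Adj] {v : V} (h : T.degree v = 1) :
    ∃ u, T.Adj v u ∧ ∀ w, T.Adj v w → w = u := by
  rw [← card_neighborFinset_eq_degree, Finset.card_eq_one] at h
  obtain ⟨u, hu⟩ := h
  refine ⟨u, ?_, ?_⟩
  · have : u ∈ T.neighborFinset v := hu ▸ Finset.mem_singleton_self u
    exact (mem_neighborFinset _ _ _).1 this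
  · intro w hw
    have : w ∈ T.neighborFinset v := (mem_neighborFinset _ _ _).2 hw
    rw [hu, Finset.mem_singleton] at this
    exact this

noncomputable def frank {V : Type*} [DecidableEq V] (A : Finset V) (x : V) : ℕ :=
  if hx : x ∈ A then (A.equivFin ⟨x, hx⟩).val else 0

lemma frank_lt {V : Type*} [DecidableEq V] {A : Finset V} {x : V} (hx : x ∈ A) :
    frank A x < A.card := by
  rw [frank, dif_pos hx]; exact (A.equivFin ⟨x, hx⟩).isLt

lemma frank_inj {V : Type*} [DecidableEq V] {A : Finset V} {x y : V}
    (hx : x ∈ A) (hy : y ∈ A) (h : frank A x = frank A y) : x = y := by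
  rw [frank, dif_pos hx, frank, dif_pos hy] at h
  exact congrArg Subtype.val (A.equivFin.injective (Fin.val_injective h))

lemma KkJoinMatching_adj (k : ℕ) (v w : Fin (3 * k + 2)) :
    (KkJoinMatching k).Adj v w ↔ v.val ≠ w.val ∧ (v.val < k ∨ w.val < k ∨
      (v.val = k ∧ w.val = k + 1) ∨ (v.val = k + 1 ∧ w.val = k) ∨
      (v.val = k + 2 ∧ w.val = k + 3) ∨ (v.val = k + 3 ∧ w.val = k + 2)) := by
  show (v ≠ w ∧ _) ↔ _
  rw [Ne, Fin.ext_iff]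

set_option maxHeartbeats 2000000

/-- `K_k ∨ ((2k-2)K_1 ∪ 2K_2)` contains every tree on `2k+3` vertices, k ≥ 1. -/
theorem stmt11 (k : ℕ) (hk : 1 ≤ k) (T : SimpleGraph (Fin (2 * k + 3))) (hT : T.IsTree) :
    ContainsCopy T (KkJoinMatching k) := by
  classical
  obtain ⟨c, hc⟩ := tree_coloring hT
  have hcardV : Fintype.card (Fin (2 * k + 3)) = 2 * k + 3 := Fintype.card_fin _
  have h2 : 1 < Fintype.card (Fin (2 * k + 3)) := by omega
  have hsum : (univ.filter fun v => c v = true).card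
      + (univ.filter fun v => c v = false).card = 2 * k + 3 := by
    have := Finset.card_filter_add_card_filter_not (s := univ)
      (p := fun v : Fin (2 * k + 3) => c v = true)
    simpa using this
  obtain ⟨s, hs⟩ : ∃ s : Bool, (univ.filter fun v => c v = s).card ≤ k + 1 := by
    by_cases h : (univ.filter fun v => c v = true).card ≤ k + 1
    · exact ⟨true, h⟩
    · exact ⟨false, by omega⟩
  set A := univ.filter fun v => c v = s with hAdef
  set B := univ.filter fun v => c v = !s with hBdef
  have hmemA : ∀ v, v ∈ A ↔ c v = s := by intro v; simp [hAdef]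
  have hmemB : ∀ v, v ∈ B ↔ ¬ (c v = s) := by
    intro v; simp only [hBdef, mem_filter, mem_univ, true_and]
    cases hcv : c v <;> cases s <;> simp
  have hAB : A.card + B.card = 2 * k + 3 := by
    rw [hAdef, hBdef]
    cases s <;> simp only [Bool.not_true, Bool.not_false] <;> omega
  have hA1 : 1 ≤ A.card := by
    obtain ⟨w, hw⟩ := exists_adj_of_connected hT.isConnected h2 ⟨0, by omega⟩
    have hne := hc hw
    rcases Bool.eq_or_eq_not (c ⟨0, by omega⟩) s with h | h
    · exact Finset.card_pos.2 ⟨_, (hmemA _).2 h⟩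
    · refine Finset.card_pos.2 ⟨w, (hmemA w).2 ?_⟩
      rw [h] at hne
      cases s <;> cases hcw : c w <;> simp_all
  have hadj : ∀ ⦃u v⦄, T.Adj u v → (c u = s ∧ ¬ c v = s) ∨ (¬ c u = s ∧ c v = s) := by
    intro u v huv
    have := hc huv
    cases hu : c u <;> cases hv : c v <;> cases s <;> simp_all
  by_cases hAk : A.card ≤ k
  · -- easy case: small side fits in the clique
    refine ⟨fun x => if hxs : c x = s then ⟨frank A x, by
        have := frank_lt ((hmemA x).2 hxs); omega⟩
      else ⟨k + frank B x, by have := frank_lt ((hmemB x).2 hxs); omega⟩, ?_, ?_⟩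
    · intro x y h
      dsimp only at h
      by_cases hx : c x = s <;> by_cases hy : c y = s
      · rw [dif_pos hx, dif_pos hy, Fin.mk.injEq] at h
        exact frank_inj ((hmemA x).2 hx) ((hmemA y).2 hy) h
      · rw [dif_pos hx, dif_neg hy, Fin.mk.injEq] at h
        have := frank_lt ((hmemA x).2 hx); omega
      · rw [dif_neg hx, dif_pos hy, Fin.mk.injEq] at h
        have := frank_lt ((hmemA y).2 hy); omega
      · rw [dif_neg hx, dif_neg hy, Fin.mk.injEq] at h
        exact frank_inj ((hmemB x).2 hx) ((hmemB y).2 hy) (by omega)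
    · intro a b hab
      dsimp only
      have h1 : c a = s → frank A a < A.card := fun h => frank_lt ((hmemA a).2 h)
      have h2 : c b = s → frank A b < A.card := fun h => frank_lt ((hmemA b).2 h)
      rcases hadj hab with ⟨ha, hb⟩ | ⟨ha, hb⟩
      · rw [dif_pos ha, dif_neg hb, KkJoinMatching_adj]
        have := h1 ha; dsimp only; omega
      · rw [dif_neg ha, dif_pos hb, KkJoinMatching_adj]
        have := h2 hb; dsimp only; omega
  · -- |A| = k+1, |B| = k+2
    have hAcard : A.card = k + 1 := by omega
    have hBcard : B.card = k + 2 := by omega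
    haveI : DecidableRel T.Adj := Classical.decRel _
    by_cases hleaf : ∃ v, c v = s ∧ T.degree v = 1
    · -- a leaf v in A, with unique neighbour u in B
      obtain ⟨v, hvs, hvdeg⟩ := hleaf
      obtain ⟨u, hvu, huniq⟩ := degree_one_nbr hvdeg
      have hus : ¬ c u = s := by
        have := hc hvu; rw [hvs] at this; exact fun h => this h.symm
      have hvA : v ∈ A := (hmemA v).2 hvs
      have huB : u ∈ B := (hmemB u).2 hus
      have hvu' : v ≠ u := hvu.ne
      set A' := A.erase v with hA'def
      set B' := B.erase u with hB'def
      have hA'card : A'.card = k := by rw [hA'def, Finset.card_erase_of_mem hvA]; omega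
      have hB'card : B'.card = k + 1 := by rw [hB'def, Finset.card_erase_of_mem huB]; omega
      have hmemA' : ∀ x, x ≠ v → c x = s → x ∈ A' :=
        fun x hx hcx => Finset.mem_erase.2 ⟨hx, (hmemA x).2 hcx⟩
      have hmemB' : ∀ x, x ≠ u → ¬ c x = s → x ∈ B' :=
        fun x hx hcx => Finset.mem_erase.2 ⟨hx, (hmemB x).2 hcx⟩
      refine ⟨fun x => if hxv : x = v then ⟨k, by omega⟩
        else if hxu : x = u then ⟨k + 1, by omega⟩
        else if hxs : c x = s then ⟨frank A' x, by have := frank_lt (hmemA' x hxv hxs); omega⟩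
        else ⟨k + 2 + frank B' x, by have := frank_lt (hmemB' x hxu hxs); omega⟩, ?_, ?_⟩
      · intro x y h
        dsimp only at h
        have hbAx : x ≠ v → c x = s → frank A' x < k := fun h1 h2 => by
          have := frank_lt (hmemA' x h1 h2); omega
        have hbAy : y ≠ v → c y = s → frank A' y < k := fun h1 h2 => by
          have := frank_lt (hmemA' y h1 h2); omega
        have hbBx : x ≠ u → ¬ c x = s → frank B' x < k + 1 := fun h1 h2 => by
          have := frank_lt (hmemB' x h1 h2); omega
        have hbBy : y ≠ u → ¬ c y = s → frank B' y < k + 1 := fun h1 h2 => by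
          have := frank_lt (hmemB' y h1 h2); omega
        by_cases hxv : x = v <;> by_cases hyv : y = v
        · rw [hxv, hyv]
        · rw [dif_pos hxv, dif_neg hyv] at h
          by_cases hyu : y = u
          · rw [dif_pos hyu, Fin.mk.injEq] at h; omega
          · rw [dif_neg hyu] at h
            by_cases hys : c y = s
            · rw [dif_pos hys, Fin.mk.injEq] at h; have := hbAy hyv hys; omega
            · rw [dif_neg hys, Fin.mk.injEq] at h; omega
        · rw [dif_neg hxv, dif_pos hyv] at h
          by_cases hxu : x = u
          · rw [dif_pos hxu, Fin.mk.injEq] at h; omega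
          · rw [dif_neg hxu] at h
            by_cases hxs : c x = s
            · rw [dif_pos hxs, Fin.mk.injEq] at h; have := hbAx hxv hxs; omega
            · rw [dif_neg hxs, Fin.mk.injEq] at h; omega
        · rw [dif_neg hxv, dif_neg hyv] at h
          by_cases hxu : x = u <;> by_cases hyu : y = u
          · rw [hxu, hyu]
          · rw [dif_pos hxu, dif_neg hyu] at h
            by_cases hys : c y = s
            · rw [dif_pos hys, Fin.mk.injEq] at h; have := hbAy hyv hys; omega
            · rw [dif_neg hys, Fin.mk.injEq] at h; omega
          · rw [dif_neg hxu, dif_pos hyu] at h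
            by_cases hxs : c x = s
            · rw [dif_pos hxs, Fin.mk.injEq] at h; have := hbAx hxv hxs; omega
            · rw [dif_neg hxs, Fin.mk.injEq] at h; omega
          · rw [dif_neg hxu, dif_neg hyu] at h
            by_cases hxs : c x = s <;> by_cases hys : c y = s
            · rw [dif_pos hxs, dif_pos hys, Fin.mk.injEq] at h
              exact frank_inj (hmemA' x hxv hxs) (hmemA' y hyv hys) h
            · rw [dif_pos hxs, dif_neg hys, Fin.mk.injEq] at h
              have := hbAx hxv hxs; omega
            · rw [dif_neg hxs, dif_pos hys, Fin.mk.injEq] at h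
              have := hbAy hyv hys; omega
            · rw [dif_neg hxs, dif_neg hys, Fin.mk.injEq] at h
              exact frank_inj (hmemB' x hxu hxs) (hmemB' y hyu hys) (by omega)
      · intro a b hab
        dsimp only
        have hane : a ≠ b := hab.ne
        by_cases hav : a = v
        · have hbu : b = u := huniq b (hav ▸ hab)
          have hbv : b ≠ v := by rw [hbu]; exact fun h => hvu' h.symm
          rw [dif_pos hav, dif_neg hbv, dif_pos hbu, KkJoinMatching_adj]
          dsimp only; omega
        · by_cases hbv : b = v
          · have hau : a = u := huniq a (hbv ▸ hab.symm)
            rw [dif_neg hav, dif_pos hau, dif_pos hbv, KkJoinMatching_adj]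
            dsimp only; omega
          · -- neither endpoint is v; one endpoint is in A', or is u
            rcases hadj hab with ⟨has, hbs⟩ | ⟨has, hbs⟩
            · -- a has colour s, a ≠ v so a ∈ A', maps below k
              have hau : a ≠ u := fun h => hus (h ▸ has)
              rw [dif_neg hav, dif_neg hau, dif_pos has]
              have hfa := frank_lt (hmemA' a hav has)
              by_cases hbu : b = u
              · rw [dif_neg hbv, dif_pos hbu, KkJoinMatching_adj]
                dsimp only; omega
              · rw [dif_neg hbv, dif_neg hbu, dif_neg hbs, KkJoinMatching_adj]
                have := frank_lt (hmemB' b hbu hbs); dsimp only; omega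
            · have hbu : b ≠ u := fun h => hus (h ▸ hbs)
              rw [dif_neg hbv, dif_neg hbu, dif_pos hbs]
              have hfb := frank_lt (hmemA' b hbv hbs)
              by_cases hau : a = u
              · rw [dif_neg hav, dif_pos hau, KkJoinMatching_adj]
                dsimp only; omega
              · rw [dif_neg hav, dif_neg hau, dif_neg has, KkJoinMatching_adj]
                have := frank_lt (hmemB' a hau has); dsimp only; omega
    · -- no leaf in A: all leaves in B, two of them with distinct neighbours
      push_neg at hleaf
      have hdeg1 : ∀ v, 1 ≤ T.degree v := by
        intro v
        obtain ⟨w, hw⟩ := exists_adj_of_connected hT.isConnected h2 v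
        exact (T.degree_pos_iff_exists_adj v).2 ⟨w, hw⟩
      have hE : T.edgeFinset.card = 2 * k + 2 := by
        have := hT.card_edgeFinset
        rw [hcardV] at this; omega
      have hsumA : ∑ v ∈ A, T.degree v = 2 * k + 2 := by
        have h1 := sum_degree_color hc s
        rw [← hAdef] at h1
        omega
      have hdegA : ∀ v ∈ A, T.degree v = 2 := by
        intro v hv
        by_contra hne
        have h2le : ∀ w ∈ A, 2 ≤ T.degree w := by
          intro w hw
          have := hdeg1 w
          have := hleaf w ((hmemA w).1 hw)
          omega
        have h3 : 2 < T.degree v := lt_of_le_of_ne (h2le v hv) (Ne.symm hne)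
        have hlt := Finset.sum_lt_sum h2le ⟨v, hv, h3⟩
        rw [Finset.sum_const, smul_eq_mul] at hlt
        omega
      have hL2 : 2 ≤ (univ.filter fun v => T.degree v = 1).card := by
        have hhs := T.sum_degrees_eq_twice_card_edges
        rw [hE] at hhs
        have hb : ∀ v ∈ (univ : Finset (Fin (2 * k + 3))),
            (if T.degree v = 1 then 1 else 2) ≤ T.degree v := by
          intro v _
          by_cases h : T.degree v = 1
          · rw [if_pos h]; omega
          · rw [if_neg h]; have := hdeg1 v; omega
        have hle := Finset.sum_le_sum hb
        have hsplit := Finset.sum_filter_add_sum_filter_not univ (fun v => T.degree v = 1)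
            (fun v => if T.degree v = 1 then 1 else 2)
        have e1 : ∑ v ∈ univ.filter (fun v => T.degree v = 1),
            (if T.degree v = 1 then 1 else 2)
            = (univ.filter fun v => T.degree v = 1).card := by
          rw [Finset.sum_congr rfl (fun v hv => if_pos (Finset.mem_filter.1 hv).2),
            Finset.sum_const, smul_eq_mul, mul_one]
        have e2 : ∑ v ∈ univ.filter (fun v => ¬ T.degree v = 1),
            (if T.degree v = 1 then 1 else 2)
            = 2 * (univ.filter fun v => ¬ T.degree v = 1).card := by
          rw [Finset.sum_congr rfl (fun v hv => if_neg (Finset.mem_filter.1 hv).2),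
            Finset.sum_const, smul_eq_mul, mul_comm]
        have hcards := Finset.card_filter_add_card_filter_not
            (s := (univ : Finset (Fin (2 * k + 3)))) (p := fun v => T.degree v = 1)
        rw [Finset.card_univ, hcardV] at hcards
        omega
      obtain ⟨b1, hb1L, b2, hb2L, hb12⟩ := Finset.one_lt_card.1 hL2
      have hdegb1 : T.degree b1 = 1 := (Finset.mem_filter.1 hb1L).2
      have hdegb2 : T.degree b2 = 1 := (Finset.mem_filter.1 hb2L).2
      have hb1s : ¬ c b1 = s := fun h => hleaf b1 h hdegb1
      have hb2s : ¬ c b2 = s := fun h => hleaf b2 h hdegb2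
      obtain ⟨a1, hb1a1, huniq1⟩ := degree_one_nbr hdegb1
      obtain ⟨a2, hb2a2, huniq2⟩ := degree_one_nbr hdegb2
      have ha1s : c a1 = s := by
        rcases hadj hb1a1 with ⟨h, h'⟩ | ⟨h, h'⟩
        · exact absurd h hb1s
        · exact h'
      have ha2s : c a2 = s := by
        rcases hadj hb2a2 with ⟨h, h'⟩ | ⟨h, h'⟩
        · exact absurd h hb2s
        · exact h'
      have ha12 : a1 ≠ a2 := by
        rintro rfl
        have hdega : T.degree a1 = 2 := hdegA a1 ((hmemA a1).2 ha1s)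
        have hsub : ({b1, b2} : Finset _) ⊆ T.neighborFinset a1 := by
          intro w hw
          rcases Finset.mem_insert.1 hw with rfl | hw
          · exact (T.mem_neighborFinset _ _).2 hb1a1.symm
          · rw [Finset.mem_singleton] at hw
            subst hw
            exact (T.mem_neighborFinset _ _).2 hb2a2.symm
        have heq : ({b1, b2} : Finset _) = T.neighborFinset a1 :=
          Finset.eq_of_subset_of_card_le hsub
            (by rw [T.card_neighborFinset_eq_degree, hdega, Finset.card_pair hb12])
        have hclosed : ∀ u' ∈ ({a1, b1, b2} : Set (Fin (2 * k + 3))), ∀ w, T.Adj u' w →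
            w ∈ ({a1, b1, b2} : Set (Fin (2 * k + 3))) := by
          intro u' hu' w hw
          simp only [Set.mem_insert_iff, Set.mem_singleton_iff] at hu' ⊢
          rcases hu' with rfl | rfl | rfl
          · have hwn : w ∈ T.neighborFinset u' := (T.mem_neighborFinset _ _).2 hw
            rw [← heq] at hwn
            rcases Finset.mem_insert.1 hwn with rfl | hwn
            · exact Or.inr (Or.inl rfl)
            · rw [Finset.mem_singleton] at hwn
              exact Or.inr (Or.inr hwn)
          · exact Or.inl (huniq1 w hw)
          · exact Or.inl (huniq2 w hw)
        obtain ⟨z, hz⟩ : ∃ z, z ∉ ({a1, b1, b2} : Finset (Fin (2 * k + 3))) := by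
          by_contra hall
          push_neg at hall
          have hsub2 : (univ : Finset (Fin (2 * k + 3))) ⊆ {a1, b1, b2} :=
            fun z _ => hall z
          have hc1 := Finset.card_le_card hsub2
          have hc2 : ({a1, b1, b2} : Finset (Fin (2 * k + 3))).card ≤ 3 :=
            le_trans (Finset.card_insert_le _ _)
              (by have := Finset.card_insert_le b1 ({b2} : Finset (Fin (2 * k + 3)));
                  simp only [Finset.card_singleton] at this; omega)
          rw [Finset.card_univ, hcardV] at hc1
          omega
        have hz' := reachable_mem_of_closed hclosed (Or.inl rfl)
          (hT.isConnected.preconnected a1 z)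
        simp only [Set.mem_insert_iff, Set.mem_singleton_iff] at hz'
        simp only [Finset.mem_insert, Finset.mem_singleton, not_or] at hz
        tauto
      have hne_a1b1 : a1 ≠ b1 := fun h => hb1s (h ▸ ha1s)
      have hne_a1b2 : a1 ≠ b2 := fun h => hb2s (h ▸ ha1s)
      have hne_a2b1 : a2 ≠ b1 := fun h => hb1s (h ▸ ha2s)
      have hne_a2b2 : a2 ≠ b2 := fun h => hb2s (h ▸ ha2s)
      set A2 := (A.erase a1).erase a2 with hA2def
      set B2 := (B.erase b1).erase b2 with hB2def
      have hA2card : A2.card + 2 = k + 1 := by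
        rw [hA2def, Finset.card_erase_of_mem
            (Finset.mem_erase.2 ⟨ha12.symm, (hmemA a2).2 ha2s⟩),
          Finset.card_erase_of_mem ((hmemA a1).2 ha1s), hAcard]
        omega
      have hB2card : B2.card = k := by
        rw [hB2def, Finset.card_erase_of_mem
            (Finset.mem_erase.2 ⟨hb12.symm, (hmemB b2).2 hb2s⟩),
          Finset.card_erase_of_mem ((hmemB b1).2 hb1s), hBcard]
        omega
      have hmemA2 : ∀ x, x ≠ a1 → x ≠ a2 → c x = s → x ∈ A2 := fun x h1 h2 h3 =>
        Finset.mem_erase.2 ⟨h2, Finset.mem_erase.2 ⟨h1, (hmemA x).2 h3⟩⟩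
      have hmemB2 : ∀ x, x ≠ b1 → x ≠ b2 → ¬ c x = s → x ∈ B2 := fun x h1 h2 h3 =>
        Finset.mem_erase.2 ⟨h2, Finset.mem_erase.2 ⟨h1, (hmemB x).2 h3⟩⟩
      have pf1 : k + 1 < 3 * k + 2 := by omega
      have pf2 : k + 3 < 3 * k + 2 := by omega
      have pf3 : k < 3 * k + 2 := by omega
      have pf4 : k + 2 < 3 * k + 2 := by omega
      have pfA : ∀ x, x ≠ a1 → x ≠ a2 → c x = s → k + 4 + frank A2 x < 3 * k + 2 :=
        fun x h1 h2 h3 => by have := frank_lt (hmemA2 x h1 h2 h3); omega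
      have pfB : ∀ x, x ≠ b1 → x ≠ b2 → ¬ c x = s → frank B2 x < 3 * k + 2 :=
        fun x h1 h2 h3 => by have := frank_lt (hmemB2 x h1 h2 h3); omega
      refine ⟨fun x => if hx1 : x = b1 then ⟨k + 1, pf1⟩
        else if hx2 : x = b2 then ⟨k + 3, pf2⟩
        else if hx3 : x = a1 then ⟨k, pf3⟩
        else if hx4 : x = a2 then ⟨k + 2, pf4⟩
        else if hxs : c x = s then ⟨k + 4 + frank A2 x, pfA x hx3 hx4 hxs⟩
        else ⟨frank B2 x, pfB x hx1 hx2 hxs⟩, ?_, ?_⟩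
      · intro x y h
        dsimp only at h
        by_cases hx1 : x = b1
        · rw [dif_pos hx1] at h
          by_cases hy1 : y = b1
          · rw [dif_pos hy1, Fin.mk.injEq] at h
            rw [hx1, hy1]
          ·
            by_cases hy2 : y = b2
            · rw [dif_neg hy1, dif_pos hy2, Fin.mk.injEq] at h
              omega
            ·
              by_cases hy3 : y = a1
              · rw [dif_neg hy1, dif_neg hy2, dif_pos hy3, Fin.mk.injEq] at h
                omega
              ·
                by_cases hy4 : y = a2
                · rw [dif_neg hy1, dif_neg hy2, dif_neg hy3, dif_pos hy4, Fin.mk.injEq] at h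
                  omega
                ·
                  by_cases hys : c y = s
                  · rw [dif_neg hy1, dif_neg hy2, dif_neg hy3, dif_neg hy4, dif_pos hys, Fin.mk.injEq] at h
                    have := frank_lt (hmemA2 y hy3 hy4 hys)
                    omega
                  · rw [dif_neg hy1, dif_neg hy2, dif_neg hy3, dif_neg hy4, dif_neg hys, Fin.mk.injEq] at h
                    have := frank_lt (hmemB2 y hy1 hy2 hys)
                    omega
        ·
          by_cases hx2 : x = b2
          · rw [dif_neg hx1, dif_pos hx2] at h
            by_cases hy1 : y = b1
            · rw [dif_pos hy1, Fin.mk.injEq] at h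
              omega
            ·
              by_cases hy2 : y = b2
              · rw [dif_neg hy1, dif_pos hy2, Fin.mk.injEq] at h
                rw [hx2, hy2]
              ·
                by_cases hy3 : y = a1
                · rw [dif_neg hy1, dif_neg hy2, dif_pos hy3, Fin.mk.injEq] at h
                  omega
                ·
                  by_cases hy4 : y = a2
                  · rw [dif_neg hy1, dif_neg hy2, dif_neg hy3, dif_pos hy4, Fin.mk.injEq] at h
                    omega
                  ·
                    by_cases hys : c y = s
                    · rw [dif_neg hy1, dif_neg hy2, dif_neg hy3, dif_neg hy4, dif_pos hys, Fin.mk.injEq] at h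
                      have := frank_lt (hmemA2 y hy3 hy4 hys)
                      omega
                    · rw [dif_neg hy1, dif_neg hy2, dif_neg hy3, dif_neg hy4, dif_neg hys, Fin.mk.injEq] at h
                      have := frank_lt (hmemB2 y hy1 hy2 hys)
                      omega
          ·
            by_cases hx3 : x = a1
            · rw [dif_neg hx1, dif_neg hx2, dif_pos hx3] at h
              by_cases hy1 : y = b1
              · rw [dif_pos hy1, Fin.mk.injEq] at h
                omega
              ·
                by_cases hy2 : y = b2
                · rw [dif_neg hy1, dif_pos hy2, Fin.mk.injEq] at h
                  omega
                ·
                  by_cases hy3 : y = a1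
                  · rw [dif_neg hy1, dif_neg hy2, dif_pos hy3, Fin.mk.injEq] at h
                    rw [hx3, hy3]
                  ·
                    by_cases hy4 : y = a2
                    · rw [dif_neg hy1, dif_neg hy2, dif_neg hy3, dif_pos hy4, Fin.mk.injEq] at h
                      omega
                    ·
                      by_cases hys : c y = s
                      · rw [dif_neg hy1, dif_neg hy2, dif_neg hy3, dif_neg hy4, dif_pos hys, Fin.mk.injEq] at h
                        have := frank_lt (hmemA2 y hy3 hy4 hys)
                        omega
                      · rw [dif_neg hy1, dif_neg hy2, dif_neg hy3, dif_neg hy4, dif_neg hys, Fin.mk.injEq] at h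
                        have := frank_lt (hmemB2 y hy1 hy2 hys)
                        omega
            ·
              by_cases hx4 : x = a2
              · rw [dif_neg hx1, dif_neg hx2, dif_neg hx3, dif_pos hx4] at h
                by_cases hy1 : y = b1
                · rw [dif_pos hy1, Fin.mk.injEq] at h
                  omega
                ·
                  by_cases hy2 : y = b2
                  · rw [dif_neg hy1, dif_pos hy2, Fin.mk.injEq] at h
                    omega
                  ·
                    by_cases hy3 : y = a1
                    · rw [dif_neg hy1, dif_neg hy2, dif_pos hy3, Fin.mk.injEq] at h
                      omega
                    ·
                      by_cases hy4 : y = a2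
                      · rw [dif_neg hy1, dif_neg hy2, dif_neg hy3, dif_pos hy4, Fin.mk.injEq] at h
                        rw [hx4, hy4]
                      ·
                        by_cases hys : c y = s
                        · rw [dif_neg hy1, dif_neg hy2, dif_neg hy3, dif_neg hy4, dif_pos hys, Fin.mk.injEq] at h
                          have := frank_lt (hmemA2 y hy3 hy4 hys)
                          omega
                        · rw [dif_neg hy1, dif_neg hy2, dif_neg hy3, dif_neg hy4, dif_neg hys, Fin.mk.injEq] at h
                          have := frank_lt (hmemB2 y hy1 hy2 hys)
                          omega
              ·
                by_cases hxs : c x = s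
                · rw [dif_neg hx1, dif_neg hx2, dif_neg hx3, dif_neg hx4, dif_pos hxs] at h
                  by_cases hy1 : y = b1
                  · rw [dif_pos hy1, Fin.mk.injEq] at h
                    have := frank_lt (hmemA2 x hx3 hx4 hxs)
                    omega
                  ·
                    by_cases hy2 : y = b2
                    · rw [dif_neg hy1, dif_pos hy2, Fin.mk.injEq] at h
                      have := frank_lt (hmemA2 x hx3 hx4 hxs)
                      omega
                    ·
                      by_cases hy3 : y = a1
                      · rw [dif_neg hy1, dif_neg hy2, dif_pos hy3, Fin.mk.injEq] at h
                        have := frank_lt (hmemA2 x hx3 hx4 hxs)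
                        omega
                      ·
                        by_cases hy4 : y = a2
                        · rw [dif_neg hy1, dif_neg hy2, dif_neg hy3, dif_pos hy4, Fin.mk.injEq] at h
                          have := frank_lt (hmemA2 x hx3 hx4 hxs)
                          omega
                        ·
                          by_cases hys : c y = s
                          · rw [dif_neg hy1, dif_neg hy2, dif_neg hy3, dif_neg hy4, dif_pos hys, Fin.mk.injEq] at h
                            exact frank_inj (hmemA2 x hx3 hx4 hxs) (hmemA2 y hy3 hy4 hys) (by omega)
                          · rw [dif_neg hy1, dif_neg hy2, dif_neg hy3, dif_neg hy4, dif_neg hys, Fin.mk.injEq] at h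
                            have := frank_lt (hmemA2 x hx3 hx4 hxs)
                            have := frank_lt (hmemB2 y hy1 hy2 hys)
                            omega
                · rw [dif_neg hx1, dif_neg hx2, dif_neg hx3, dif_neg hx4, dif_neg hxs] at h
                  by_cases hy1 : y = b1
                  · rw [dif_pos hy1, Fin.mk.injEq] at h
                    have := frank_lt (hmemB2 x hx1 hx2 hxs)
                    omega
                  ·
                    by_cases hy2 : y = b2
                    · rw [dif_neg hy1, dif_pos hy2, Fin.mk.injEq] at h
                      have := frank_lt (hmemB2 x hx1 hx2 hxs)
                      omega
                    ·
                      by_cases hy3 : y = a1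
                      · rw [dif_neg hy1, dif_neg hy2, dif_pos hy3, Fin.mk.injEq] at h
                        have := frank_lt (hmemB2 x hx1 hx2 hxs)
                        omega
                      ·
                        by_cases hy4 : y = a2
                        · rw [dif_neg hy1, dif_neg hy2, dif_neg hy3, dif_pos hy4, Fin.mk.injEq] at h
                          have := frank_lt (hmemB2 x hx1 hx2 hxs)
                          omega
                        ·
                          by_cases hys : c y = s
                          · rw [dif_neg hy1, dif_neg hy2, dif_neg hy3, dif_neg hy4, dif_pos hys, Fin.mk.injEq] at h
                            have := frank_lt (hmemB2 x hx1 hx2 hxs)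
                            have := frank_lt (hmemA2 y hy3 hy4 hys)
                            omega
                          · rw [dif_neg hy1, dif_neg hy2, dif_neg hy3, dif_neg hy4, dif_neg hys, Fin.mk.injEq] at h
                            exact frank_inj (hmemB2 x hx1 hx2 hxs) (hmemB2 y hy1 hy2 hys) (by omega)
      · intro a b hab
        dsimp only
        by_cases hab1 : a = b1
        · have hb3 : b = a1 := huniq1 b (by rw [← hab1]; exact hab)
          have h1 : b ≠ b1 := by rw [hb3]; exact hne_a1b1
          have h2 : b ≠ b2 := by rw [hb3]; exact hne_a1b2
          rw [dif_pos hab1, dif_neg h1, dif_neg h2, dif_pos hb3, KkJoinMatching_adj]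
          dsimp only; omega
        · by_cases hab2 : a = b2
          · have hb4 : b = a2 := huniq2 b (by rw [← hab2]; exact hab)
            have h1 : b ≠ b1 := by rw [hb4]; exact hne_a2b1
            have h2 : b ≠ b2 := by rw [hb4]; exact hne_a2b2
            have h3 : b ≠ a1 := by rw [hb4]; exact ha12.symm
            rw [dif_neg hab1, dif_pos hab2, dif_neg h1, dif_neg h2, dif_neg h3,
              dif_pos hb4, KkJoinMatching_adj]
            dsimp only; omega
          · by_cases hba1 : b = b1
            · have ha3 : a = a1 := huniq1 a (by rw [← hba1]; exact hab.symm)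
              have h1 : a ≠ b1 := by rw [ha3]; exact hne_a1b1
              have h2 : a ≠ b2 := by rw [ha3]; exact hne_a1b2
              rw [dif_neg h1, dif_neg h2, dif_pos ha3, dif_pos hba1, KkJoinMatching_adj]
              dsimp only; omega
            · by_cases hba2 : b = b2
              · have ha4 : a = a2 := huniq2 a (by rw [← hba2]; exact hab.symm)
                have h1 : a ≠ b1 := by rw [ha4]; exact hne_a2b1
                have h2 : a ≠ b2 := by rw [ha4]; exact hne_a2b2
                have h3 : a ≠ a1 := by rw [ha4]; exact ha12.symm
                rw [dif_neg h1, dif_neg h2, dif_neg h3, dif_pos ha4, dif_neg hba1,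
                  dif_pos hba2, KkJoinMatching_adj]
                dsimp only; omega
              · -- neither endpoint is b1 or b2
                rcases hadj hab with ⟨has, hbs⟩ | ⟨has, hbs⟩
                · -- c a = s, b lands in B2 below k
                  have hb3 : b ≠ a1 := fun h => hbs (h ▸ ha1s)
                  have hb4 : b ≠ a2 := fun h => hbs (h ▸ ha2s)
                  have hfb := frank_lt (hmemB2 b hba1 hba2 hbs)
                  have h1 : a ≠ b1 := fun h => hb1s (h ▸ has)
                  have h2 : a ≠ b2 := fun h => hb2s (h ▸ has)
                  rw [dif_neg hba1, dif_neg hba2, dif_neg hb3, dif_neg hb4, dif_neg hbs]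
                  by_cases ha3 : a = a1
                  · rw [dif_neg h1, dif_neg h2, dif_pos ha3, KkJoinMatching_adj]
                    dsimp only; omega
                  · by_cases ha4 : a = a2
                    · rw [dif_neg h1, dif_neg h2, dif_neg ha3, dif_pos ha4,
                        KkJoinMatching_adj]
                      dsimp only; omega
                    · have hfa := frank_lt (hmemA2 a ha3 ha4 has)
                      rw [dif_neg h1, dif_neg h2, dif_neg ha3, dif_neg ha4, dif_pos has,
                        KkJoinMatching_adj]
                      dsimp only; omega
                · -- c b = s, a lands in B2 below k
                  have ha3 : a ≠ a1 := fun h => has (h ▸ ha1s)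
                  have ha4 : a ≠ a2 := fun h => has (h ▸ ha2s)
                  have hfa := frank_lt (hmemB2 a hab1 hab2 has)
                  have h1 : b ≠ b1 := fun h => hb1s (h ▸ hbs)
                  have h2 : b ≠ b2 := fun h => hb2s (h ▸ hbs)
                  rw [dif_neg hab1, dif_neg hab2, dif_neg ha3, dif_neg ha4, dif_neg has]
                  by_cases hb3 : b = a1
                  · rw [dif_neg h1, dif_neg h2, dif_pos hb3, KkJoinMatching_adj]
                    dsimp only; omega
                  · by_cases hb4 : b = a2
                    · rw [dif_neg h1, dif_neg h2, dif_neg hb3, dif_pos hb4,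
                        KkJoinMatching_adj]
                      dsimp only; omega
                    · have hfb := frank_lt (hmemA2 b hb3 hb4 hbs)
                      rw [dif_neg h1, dif_neg h2, dif_neg hb3, dif_neg hb4, dif_pos hbs,
                        KkJoinMatching_adj]
                      dsimp only; omega
end
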